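/- Let d ≥ 3 be odd, T_d := T_{1,d}, and set m⁺ = 4d / (1 − d + √(9d² − 10d + 1)) and m* = 7/2. Let 𝒟 ⊂ ℝ² be the closed triangle with vertices (0,−1), (1/(m⁺+1), −1/(m⁺+1)) and (2/9, −2/9), and let ℰ ⊂ ℝ² be the closed triangle with vertices (0,1), (−1/2, 0) and (−1/3, 0). Then T_d(𝒟) ∩ {(x,y) : y ≥ 0} ⊆ ℰ. -/

import Mathlib

/-- The model map `T_{a,d}(x,y) = (y − a(x+y)^d, y − 2a(x+y)^d)`. -/
noncomputable def Tmap (a : ℝ) (d : ℕ) (p : ℝ × ℝ) : ℝ × ℝ :=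
  (p.2 - a * (p.1 + p.2) ^ d, p.2 - 2 * a * (p.1 + p.2) ^ d)

/-- The slope `m⁺ = 4d/(1 − d + √(9d² − 10d + 1))` of the unstable
eigendirection at the periodic point `(0,1)`. -/
noncomputable def mPlus (d : ℕ) : ℝ :=
  4 * d / (1 - d + Real.sqrt (9 * (d : ℝ) ^ 2 - 10 * d + 1))

/-- The closed triangle `𝒟` with vertices `(0,−1)`, `(1/(m⁺+1), −1/(m⁺+1))`
and `(2/9, −2/9)`. -/
noncomputable def triD (d : ℕ) : Set (ℝ × ℝ) :=
  convexHull ℝ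
    {((0 : ℝ), (-1 : ℝ)),
     (1 / (mPlus d + 1), -(1 / (mPlus d + 1))),
     ((2 / 9 : ℝ), (-2 / 9 : ℝ))}

/-- The closed triangle `ℰ` with vertices `(0,1)`, `(−1/2,0)` and `(−1/3,0)`. -/
noncomputable def triE : Set (ℝ × ℝ) :=
  convexHull ℝ {((0 : ℝ), (1 : ℝ)), ((-1 / 2 : ℝ), (0 : ℝ)), ((-1 / 3 : ℝ), (0 : ℝ))}

lemma mPlus_bounds (d : ℕ) (hd : 3 ≤ d) : 0 ≤ mPlus d ∧ mPlus d ≤ 7 / 2 := by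
  have hd3 : (3 : ℝ) ≤ (d : ℝ) := by exact_mod_cast hd
  set R := Real.sqrt (9 * (d : ℝ) ^ 2 - 10 * d + 1) with hR
  have harg : (0 : ℝ) ≤ 9 * (d : ℝ) ^ 2 - 10 * d + 1 := by nlinarith
  have hR2 : R ^ 2 = 9 * (d : ℝ) ^ 2 - 10 * d + 1 := Real.sq_sqrt harg
  have hR0 : 0 ≤ R := Real.sqrt_nonneg _
  have hden : 0 < 1 - (d : ℝ) + R := by nlinarith [sq_nonneg (R - ((d:ℝ) - 1))]
  constructor
  · exact div_nonneg (by positivity) hden.le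
  · rw [mPlus, div_le_iff₀ hden]
    nlinarith [sq_nonneg (7 * R - (15 * (d : ℝ) - 7))]

lemma triD_sub (d : ℕ) (hd : 3 ≤ d) :
    triD d ⊆ {p : ℝ × ℝ | p.1 + p.2 ≤ 0 ∧ -1 ≤ p.1 + p.2 ∧
      2 / 9 * (1 + p.1 + p.2) ≤ p.1 ∧ -1 ≤ p.2} := by
  obtain ⟨hm0, hm7⟩ := mPlus_bounds d hd
  have hmd : 0 < mPlus d + 1 := by linarith
  have ht1 : 1 / (mPlus d + 1) ≤ 1 := by
    rw [div_le_one hmd]; linarith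
  have ht2 : 2 / 9 ≤ 1 / (mPlus d + 1) := by
    rw [div_le_div_iff₀ (by norm_num) hmd]; linarith
  have hconv : Convex ℝ {p : ℝ × ℝ | p.1 + p.2 ≤ 0 ∧ -1 ≤ p.1 + p.2 ∧
      2 / 9 * (1 + p.1 + p.2) ≤ p.1 ∧ -1 ≤ p.2} := by
    intro p hp q hq a b ha hb hab
    obtain ⟨hp1, hp2, hp3, hp4⟩ := hp
    obtain ⟨hq1, hq2, hq3, hq4⟩ := hq
    simp only [Set.mem_setOf_eq, Prod.fst_add, Prod.snd_add, Prod.smul_fst, Prod.smul_snd,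
      smul_eq_mul]
    refine ⟨?_, ?_, ?_, ?_⟩ <;> nlinarith [mul_le_mul_of_nonneg_left hp1 ha,
      mul_le_mul_of_nonneg_left hq1 hb, mul_le_mul_of_nonneg_left hp2 ha,
      mul_le_mul_of_nonneg_left hq2 hb, mul_le_mul_of_nonneg_left hp3 ha,
      mul_le_mul_of_nonneg_left hq3 hb, mul_le_mul_of_nonneg_left hp4 ha,
      mul_le_mul_of_nonneg_left hq4 hb]
  refine convexHull_min ?_ hconv
  rintro p hp
  simp only [Set.mem_insert_iff, Set.mem_singleton_iff] at hp
  rcases hp with rfl | rfl | rfl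
  · exact ⟨by norm_num, by norm_num, by norm_num, by norm_num⟩
  · refine ⟨?_, ?_, ?_, ?_⟩
    · show 1 / (mPlus d + 1) + -(1 / (mPlus d + 1)) ≤ 0
      linarith
    · show -1 ≤ 1 / (mPlus d + 1) + -(1 / (mPlus d + 1))
      linarith
    · show 2 / 9 * (1 + 1 / (mPlus d + 1) + -(1 / (mPlus d + 1))) ≤ 1 / (mPlus d + 1)
      linarith
    · show -1 ≤ -(1 / (mPlus d + 1))
      linarith
  · exact ⟨by norm_num, by norm_num, by norm_num, by norm_num⟩

/-- `T_d(𝒟) ∩ {y ≥ 0} ⊆ ℰ`. -/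
theorem stmt13 (d : ℕ) (hd : 3 ≤ d) (hodd : Odd d) :
    (Tmap 1 d '' triD d) ∩ {p : ℝ × ℝ | 0 ≤ p.2} ⊆ triE := by
  rintro ⟨X, Y⟩ ⟨⟨⟨x, y⟩, hp, hT⟩, hY⟩
  simp only [Set.mem_setOf_eq] at hY
  obtain ⟨hs0, hs1, hx29, hy1⟩ := triD_sub d hd hp
  simp only at hs0 hs1 hx29 hy1
  set s : ℝ := x + y with hs
  set u : ℝ := s ^ d with hu
  have hTX : X = y - u ∧ Y = y - 2 * u := by
    have := hT
    simp only [Tmap, one_mul, Prod.mk.injEq] at this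
    exact ⟨this.1.symm, by rw [← this.2]; ring⟩
  obtain ⟨hX, hYe⟩ := hTX
  clear_value s u
  -- basic facts about u = s^d
  have hcube : s ^ 3 ≤ u := by
    rw [hu]
    have h1 : |s| ≤ 1 := abs_le.mpr ⟨hs1, hs0.trans (by norm_num)⟩
    have h2 : |s| ^ d ≤ |s| ^ 3 := pow_le_pow_of_le_one (abs_nonneg s) h1 hd
    have h3 : -(|s| ^ d) ≤ s ^ d := neg_abs_le _ |>.trans_eq' (by rw [abs_pow])
    have h4 : s ^ 3 = -(|s| ^ 3) := by
      rcases abs_of_nonpos hs0 with h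
      rw [h]; ring
    rw [h4]
    calc -(|s| ^ 3) ≤ -(|s| ^ d) := by linarith
      _ ≤ s ^ d := h3
  -- Y ≥ 0 gives y ≥ 2u ; x ≥ 2/9 (1+s) gives 9 y ≤ 7 s - 2
  have hy2u : 2 * u ≤ y := by rw [hYe] at hY; linarith
  have h9y : 9 * y ≤ 7 * s - 2 := by
    have : x = s - y := by rw [hs]; ring
    nlinarith
  -- hence 18 s^3 ≤ 7 s - 2, forcing s ≤ -1/2
  have h18 : 18 * s ^ 3 ≤ 7 * s - 2 := by nlinarith
  have shalf : s ≤ -(1 / 2) := by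
    by_contra h
    push_neg at h
    have ha : (0:ℝ) ≤ s + 1 / 2 := by linarith
    have hb : (0:ℝ) ≤ -s := by linarith
    nlinarith [mul_nonneg (mul_nonneg ha hb) hb, mul_nonneg ha hb]
  -- the three halfspace inequalities for (X, Y)
  have hq : (0:ℝ) ≤ 9 * s ^ 2 - 9 * s - 5 := by nlinarith [mul_nonneg (by linarith : (0:ℝ) ≤ -(s + 1/2)) (by linarith : (0:ℝ) ≤ -(s - 3/2))]
  have key : 2 * y + 1 ≤ u := by
    nlinarith [mul_nonneg (by linarith : (0:ℝ) ≤ s + 1) hq]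
  have hE2 : 0 ≤ 2 * X - Y + 1 := by rw [hX, hYe]; linarith
  have hE3 : 3 * X - Y + 1 ≤ 0 := by rw [hX, hYe]; linarith
  -- now show (X, Y) ∈ triE
  rw [triE, convexHull_insert (by exact ⟨_, Set.mem_insert _ _⟩), mem_convexJoin]
  have hY1 : Y ≤ 1 := by linarith
  rcases eq_or_lt_of_le hY1 with hY1' | hY1'
  · -- Y = 1 forces X = 0
    have hX0 : X = 0 := by linarith
    refine ⟨(0, 1), rfl, ((-1/2 : ℝ), (0:ℝ)), ?_, ?_⟩
    · exact subset_convexHull ℝ _ (Set.mem_insert _ _)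
    · rw [hX0, ← hY1']
      exact left_mem_segment ℝ _ _
  · -- Y < 1 : explicit convex combination
    have hc : (0:ℝ) < 1 - Y := by linarith
    set μ : ℝ := -2 * (3 * X - Y + 1) with hμ
    set ν : ℝ := 3 * (2 * X - Y + 1) with hν
    have hμ0 : 0 ≤ μ := by rw [hμ]; linarith
    have hν0 : 0 ≤ ν := by rw [hν]; linarith
    have hμν : μ + ν = 1 - Y := by rw [hμ, hν]; ring
    clear_value μ ν
    have hne : (1:ℝ) - Y ≠ 0 := hc.ne'
    refine ⟨(0, 1), rfl, (μ / (1 - Y)) • ((-1/2 : ℝ), (0:ℝ)) + (ν / (1 - Y)) • ((-1/3 : ℝ), (0:ℝ)), ?_, ?_⟩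
    · rw [convexHull_pair]
      exact ⟨μ / (1 - Y), ν / (1 - Y), div_nonneg hμ0 hc.le, div_nonneg hν0 hc.le,
        by field_simp; linarith, rfl⟩
    · refine ⟨Y, 1 - Y, hY, hc.le, by ring, ?_⟩
      have h1 : (1 - Y) • ((μ / (1 - Y)) • ((-1/2 : ℝ), (0:ℝ)) + (ν / (1 - Y)) • ((-1/3 : ℝ), (0:ℝ)))
          = (μ * (-1/2) + ν * (-1/3), (0:ℝ)) := by
        simp only [smul_add, smul_smul, Prod.smul_mk, smul_eq_mul, Prod.mk_add_mk,
          Prod.mk.injEq]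
        constructor
        · field_simp
        · ring
      rw [h1]
      simp only [Prod.smul_mk, smul_eq_mul, Prod.mk_add_mk, Prod.mk.injEq]
      constructor
      · rw [hμ, hν]; ring
      · ring
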